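/- arXiv:math/9811182 — 4 statements merged into one kernel-verified Lean document; each statement's English description precedes it below -/
import Mathlib

section
/- Let ‖·‖ be a seminorm on ℝ² that restricts to an integer-valued function on the lattice ℤ² and is nonzero and indefinite (i.e., its kernel is nonzero but ‖·‖ is not identically zero). Then there is a unique pair ±α of primitive elements of ℤ² with ‖α‖ = 0, and for any β ∈ ℤ², ‖β‖ = 0 if and only if β is an integer multiple of α. -/
/-- The inclusion of the lattice `ℤ × ℤ` in `ℝ × ℝ`. -/
def latticeEmb (β : ℤ × ℤ) : ℝ × ℝ := ((β.1 : ℝ), (β.2 : ℝ))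

/-- An element `α` of `ℤ × ℤ` is primitive if `α = n • β` forces `n = ±1`. -/
def Primitive (α : ℤ × ℤ) : Prop :=
  ∀ (n : ℤ) (β : ℤ × ℤ), α = n • β → n = 1 ∨ n = -1

lemma padd (p : Seminorm ℝ (ℝ × ℝ)) {x y : ℝ × ℝ} (hy : p y = 0) : p (x + y) = p x := by
  apply le_antisymm
  · calc p (x + y) ≤ p x + p y := map_add_le_add p x y
      _ = p x := by rw [hy, add_zero]
  · have h := map_add_le_add p (x + y) (-y)
    simpa [hy, map_neg_eq_map] using h

lemma int_kernel (a b : ℤ) (hab : ¬(a = 0 ∧ b = 0)) :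
    ∃ α : ℤ × ℤ, Primitive α ∧ a * α.1 + b * α.2 = 0 ∧
      ∀ β : ℤ × ℤ, a * β.1 + b * β.2 = 0 ↔ ∃ m : ℤ, β = m • α := by
  set g : ℤ := (Int.gcd a b : ℤ) with hgdef
  have hgpos : 0 < Int.gcd a b := Int.gcd_pos_iff.mpr (by tauto)
  have hg : g ≠ 0 := by
    rw [hgdef]
    exact_mod_cast hgpos.ne'
  set a' : ℤ := a / g with ha'def
  set b' : ℤ := b / g with hb'def
  have ha : a = g * a' := (Int.mul_ediv_cancel' (Int.gcd_dvd_left a b)).symm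
  have hb : b = g * b' := (Int.mul_ediv_cancel' (Int.gcd_dvd_right a b)).symm
  have hcop : IsCoprime a' b' := by
    rw [Int.isCoprime_iff_gcd_eq_one]
    exact Int.gcd_div_gcd_div_gcd hgpos
  refine ⟨(b', -a'), ?_, by rw [ha, hb]; ring, ?_⟩
  · intro n β h
    rw [Prod.ext_iff] at h
    simp only [Prod.smul_fst, Prod.smul_snd, smul_eq_mul] at h
    have h1 : n ∣ b' := ⟨β.1, h.1⟩
    have h2 : n ∣ a' := ⟨-β.2, by linarith [h.2]⟩
    have := hcop.isUnit_of_dvd' h2 h1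
    exact Int.isUnit_iff.mp this
  · intro β
    constructor
    · intro h
      have h' : a' * β.1 + b' * β.2 = 0 := by
        have hgz : g * (a' * β.1 + b' * β.2) = 0 := by rw [ha, hb] at h; linarith [h]
        rcases mul_eq_zero.mp hgz with h | h
        · exact absurd h hg
        · exact h
      have hdvd : b' ∣ β.1 := by
        have : b' ∣ a' * β.1 := ⟨-β.2, by linarith [h']⟩
        exact (hcop.symm).dvd_of_dvd_mul_left this
      obtain ⟨m, hm⟩ := hdvd
      by_cases hb' : b' = 0
      · have hu : IsUnit a' := by
          rw [hb'] at hcop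
          exact isCoprime_zero_right.mp hcop
        rcases Int.isUnit_iff.mp hu with h1 | h1
        · refine ⟨-β.2, ?_⟩
          have hβ1 : β.1 = 0 := by rw [h1, hb'] at h'; linarith [h']
          ext <;> simp [hb', h1, hβ1]
        · refine ⟨β.2, ?_⟩
          have hβ1 : β.1 = 0 := by rw [h1, hb'] at h'; linarith [h']
          ext <;> simp [hb', h1, hβ1]
      · have hβ2 : β.2 = -(a' * m) := by
          have : b' * (a' * m + β.2) = 0 := by rw [hm] at h'; linarith [h']
          rcases mul_eq_zero.mp this with h | h
          · exact absurd h hb'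
          · linarith [h]
        exact ⟨m, by ext <;> simp [hm, hβ2] <;> ring⟩
    · rintro ⟨m, rfl⟩
      simp only [Prod.smul_fst, Prod.smul_snd, smul_eq_mul]
      rw [ha, hb]; ring

/-- A nonzero indefinite seminorm on `ℝ²` which is integer-valued on the lattice `ℤ²`
vanishes on a unique pair `±α` of primitive lattice elements, and its zero set in the
lattice is exactly the set of integer multiples of `α`. -/
theorem stmt_2 (p : Seminorm ℝ (ℝ × ℝ))
    (hint : ∀ β : ℤ × ℤ, ∃ m : ℤ, p (latticeEmb β) = m)
    (hnz : ∃ v : ℝ × ℝ, p v ≠ 0)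
    (hindef : ∃ v : ℝ × ℝ, v ≠ 0 ∧ p v = 0) :
    ∃ α : ℤ × ℤ, Primitive α ∧ p (latticeEmb α) = 0 ∧
      (∀ α' : ℤ × ℤ, Primitive α' → p (latticeEmb α') = 0 → α' = α ∨ α' = -α) ∧
      (∀ β : ℤ × ℤ, p (latticeEmb β) = 0 ↔ ∃ m : ℤ, β = m • α) := by
  obtain ⟨w, hw⟩ := hnz
  obtain ⟨v, hv0, hpv⟩ := hindef
  have hv : v.1 ≠ 0 ∨ v.2 ≠ 0 := by
    by_contra h; push_neg at h
    exact hv0 (Prod.ext h.1 h.2)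
  -- any vector parallel to v is in the kernel
  have L1 : ∀ x : ℝ × ℝ, x.1 * v.2 - x.2 * v.1 = 0 → p x = 0 := by
    intro x hx
    rcases hv with h1 | h2
    · have hxe : x = (x.1 / v.1) • v := by
        ext
        · simp [Prod.smul_fst]; field_simp
        · simp [Prod.smul_snd]; field_simp; linarith [hx]
      rw [hxe, map_smul_eq_mul, hpv, mul_zero]
    · have hxe : x = (x.2 / v.2) • v := by
        ext
        · simp [Prod.smul_fst]; field_simp; linarith [hx]
        · simp [Prod.smul_snd]; field_simp
      rw [hxe, map_smul_eq_mul, hpv, mul_zero]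
  set d : ℝ := w.1 * v.2 - w.2 * v.1 with hddef
  have hd : d ≠ 0 := fun h => hw (L1 w h)
  -- the explicit formula for p
  have L2 : ∀ x : ℝ × ℝ, p x = |(x.1 * v.2 - x.2 * v.1) / d| * p w := by
    intro x
    set t : ℝ := (x.1 * v.2 - x.2 * v.1) / d with htdef
    have ht : t * d = x.1 * v.2 - x.2 * v.1 := div_mul_cancel₀ _ hd
    have hx : p (x - t • w) = 0 := by
      apply L1
      have hc1 : (x - t • w).1 = x.1 - t * w.1 := rfl
      have hc2 : (x - t • w).2 = x.2 - t * w.2 := rfl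
      rw [hddef] at ht
      rw [hc1, hc2]
      linear_combination -ht
    have hpeq : p x = p (t • w) := by
      have h := padd p (x := t • w) (y := x - t • w) hx
      simpa using h
    rw [hpeq, map_smul_eq_mul, Real.norm_eq_abs]
  have hpw0 : 0 ≤ p w := apply_nonneg p w
  set A : ℝ := v.2 * p w / d with hAdef
  set B : ℝ := -(v.1 * p w / d) with hBdef
  have key : ∀ β : ℤ × ℤ, p (latticeEmb β) = |(β.1 : ℝ) * A + (β.2 : ℝ) * B| := by
    intro β
    rw [L2]
    have h1 : (latticeEmb β).1 = (β.1 : ℝ) := rfl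
    have h2 : (latticeEmb β).2 = (β.2 : ℝ) := rfl
    rw [h1, h2, ← abs_of_nonneg hpw0, ← abs_mul]
    congr 1
    rw [hAdef, hBdef]
    field_simp
    ring
  -- A and B are integers
  have hA : ∃ a : ℤ, A = a := by
    obtain ⟨m, hm⟩ := hint (1, 0)
    have h := key (1, 0)
    simp only [Int.cast_one, Int.cast_zero, one_mul, zero_mul, add_zero] at h
    rw [h] at hm
    rcases abs_cases A with ⟨h1, _⟩ | ⟨h1, _⟩
    · exact ⟨m, by rw [← hm, h1]⟩
    · exact ⟨-m, by push_cast; linarith [h1, hm]⟩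
  have hB : ∃ b : ℤ, B = b := by
    obtain ⟨m, hm⟩ := hint (0, 1)
    have h := key (0, 1)
    simp only [Int.cast_one, Int.cast_zero, one_mul, zero_mul, zero_add] at h
    rw [h] at hm
    rcases abs_cases B with ⟨h1, _⟩ | ⟨h1, _⟩
    · exact ⟨m, by rw [← hm, h1]⟩
    · exact ⟨-m, by push_cast; linarith [h1, hm]⟩
  obtain ⟨a, ha⟩ := hA
  obtain ⟨b, hb⟩ := hB
  have hab : ¬(a = 0 ∧ b = 0) := by
    rintro ⟨rfl, rfl⟩
    simp only [Int.cast_zero] at ha hb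
    have hv2 : v.2 = 0 := by
      rw [hAdef] at ha
      rcases mul_eq_zero.mp (by field_simp at ha; rw [mul_zero] at ha; exact ha) with h | h
      · exact h
      · exact absurd h hw
    have hv1 : v.1 = 0 := by
      rw [hBdef] at hb
      have hb' : v.1 * p w / d = 0 := by linarith [hb]
      rcases mul_eq_zero.mp (by field_simp at hb'; rw [mul_zero] at hb'; exact hb') with h | h
      · exact h
      · exact absurd h hw
    exact hv0 (Prod.ext hv1 hv2)
  have key' : ∀ β : ℤ × ℤ, p (latticeEmb β) = 0 ↔ a * β.1 + b * β.2 = 0 := by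
    intro β
    rw [key β, ha, hb, abs_eq_zero]
    constructor
    · intro h
      exact_mod_cast (by push_cast; linarith [h] : ((a * β.1 + b * β.2 : ℤ) : ℝ) = 0)
    · intro h
      have : ((a * β.1 + b * β.2 : ℤ) : ℝ) = 0 := by exact_mod_cast h
      push_cast at this
      linarith [this]
  obtain ⟨α, hprim, hα0, hiff⟩ := int_kernel a b hab
  refine ⟨α, hprim, (key' α).mpr hα0, ?_, ?_⟩
  · intro α' hprim' h0
    obtain ⟨m, hm⟩ := (hiff α').mp ((key' α').mp h0)
    rcases hprim' m α hm with h | h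
    · left; rw [hm, h, one_smul]
    · right; rw [hm, h, neg_one_smul]
  · intro β
    rw [key' β]
    exact hiff β
end

section
/- Let ‖·‖ be a nonzero indefinite seminorm on ℝ² vanishing exactly on the line spanned by a primitive lattice element α ∈ ℤ², and suppose ‖·‖ takes integer values on ℤ². Let s = min{‖β‖ : β ∈ ℤ², ‖β‖ ≠ 0}. Then for every β ∈ ℤ², ‖β‖ = |β · α| · s, where β · α denotes the standard symplectic pairing on ℤ². -/
/-- The standard symplectic pairing on the lattice `ℤ × ℤ`. -/
def sympl (x y : ℤ × ℤ) : ℤ := x.1 * y.2 - x.2 * y.1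

lemma latticeEmb_add (x y : ℤ × ℤ) : latticeEmb (x + y) = latticeEmb x + latticeEmb y := by
  simp [latticeEmb, Prod.ext_iff]

lemma latticeEmb_smul (k : ℤ) (x : ℤ × ℤ) : latticeEmb (k • x) = (k : ℝ) • latticeEmb x := by
  simp [latticeEmb, Prod.ext_iff, Prod.smul_def]

/-- If a seminorm on `ℝ²` is integer-valued on `ℤ²` and vanishes exactly on the line
spanned by a primitive lattice element `α`, and `s` is the minimal nonzero value on the
lattice, then `‖β‖ = |β · α| ⬝ s` for every lattice element `β`. -/
theorem stmt_3 (p : Seminorm ℝ (ℝ × ℝ)) (α : ℤ × ℤ) (hα : Primitive α)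
    (hker : ∀ v : ℝ × ℝ, p v = 0 ↔ ∃ t : ℝ, v = t • latticeEmb α)
    (hint : ∀ β : ℤ × ℤ, ∃ m : ℤ, p (latticeEmb β) = m)
    (s : ℝ) (hs : IsLeast {x : ℝ | ∃ β : ℤ × ℤ, p (latticeEmb β) = x ∧ x ≠ 0} s) :
    ∀ β : ℤ × ℤ, p (latticeEmb β) = (|sympl β α| : ℝ) * s := by
  -- α is nonzero
  have hα0 : α ≠ 0 := by
    rintro rfl
    rcases hα 2 0 (by simp) with h | h <;> omega
  -- coprimality of the coordinates of α
  have hgcd : Int.gcd α.1 α.2 = 1 := by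
    have hd1 : ((Int.gcd α.1 α.2 : ℤ)) ∣ α.1 := Int.gcd_dvd_left α.1 α.2
    have hd2 : ((Int.gcd α.1 α.2 : ℤ)) ∣ α.2 := Int.gcd_dvd_right α.1 α.2
    obtain ⟨c1, hc1⟩ := hd1
    obtain ⟨c2, hc2⟩ := hd2
    have : α = (Int.gcd α.1 α.2 : ℤ) • (c1, c2) := by
      ext <;> simp [Prod.smul_def] <;> [exact hc1; exact hc2]
    rcases hα _ _ this with h | h <;> omega
  obtain ⟨a, b, hab⟩ := Int.isCoprime_iff_gcd_eq_one.mpr hgcd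
  set δ : ℤ × ℤ := (b, -a) with hδdef
  have hδα : sympl δ α = 1 := by simp only [sympl, hδdef]; linarith
  -- seminorm vanishes on the line through α
  have hpα : ∀ t : ℝ, p (t • latticeEmb α) = 0 := fun t => (hker _).mpr ⟨t, rfl⟩
  -- adding a kernel element doesn't change p
  have hadd : ∀ v w : ℝ × ℝ, p w = 0 → p (v + w) = p v := by
    intro v w hw
    apply le_antisymm
    · calc p (v + w) ≤ p v + p w := map_add_le_add p v w
        _ = p v := by rw [hw, add_zero]
    · calc p v = p (v + w + -w) := by rw [add_neg_cancel_right]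
        _ ≤ p (v + w) + p (-w) := map_add_le_add p _ _
        _ = p (v + w) := by rw [map_neg_eq_map, hw, add_zero]
  -- key formula
  have key : ∀ β : ℤ × ℤ, p (latticeEmb β) = |(sympl β α : ℝ)| * p (latticeEmb δ) := by
    intro β
    have hδ' : δ.1 * α.2 - δ.2 * α.1 = 1 := hδα
    have hdecomp : β = sympl β α • δ + sympl δ β • α := by
      ext
      · show β.1 = sympl β α * δ.1 + sympl δ β * α.1
        simp only [sympl]
        linear_combination -β.1 * hab
      · show β.2 = sympl β α * δ.2 + sympl δ β * α.2
        simp only [sympl]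
        linear_combination -β.2 * hab
    calc p (latticeEmb β)
        = p (latticeEmb (sympl β α • δ) + latticeEmb (sympl δ β • α)) := by
          rw [← latticeEmb_add, ← hdecomp]
      _ = p (latticeEmb (sympl β α • δ)) := by
          apply hadd
          rw [latticeEmb_smul]; exact hpα _
      _ = p ((sympl β α : ℝ) • latticeEmb δ) := by rw [latticeEmb_smul]
      _ = |(sympl β α : ℝ)| * p (latticeEmb δ) := by
          rw [map_smul_eq_mul, Real.norm_eq_abs]
  -- p δ ≠ 0
  have hpδ : p (latticeEmb δ) ≠ 0 := by
    intro h
    obtain ⟨t, ht⟩ := (hker _).mp h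
    have h1 : ((b : ℤ) : ℝ) = t * (α.1 : ℝ) := congrArg Prod.fst ht
    have h2 : ((-a : ℤ) : ℝ) = t * (α.2 : ℝ) := congrArg Prod.snd ht
    push_cast at h1 h2
    have hc : ((sympl δ α : ℤ) : ℝ) = 0 := by
      push_cast [sympl]
      rw [h1, show ((δ.2 : ℤ) : ℝ) = -(a : ℝ) by simp [hδdef], h2]; ring
    rw [hδα] at hc
    norm_num at hc
  -- s = p δ
  have hsval : s = p (latticeEmb δ) := by
    obtain ⟨⟨β0, hβ0, hs0⟩, hlb⟩ := hs
    have h1 : s ≤ p (latticeEmb δ) := hlb ⟨δ, rfl, hpδ⟩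
    have h2 : p (latticeEmb δ) ≤ s := by
      rw [key β0] at hβ0
      have hn : sympl β0 α ≠ 0 := by
        intro h
        rw [h] at hβ0
        simp at hβ0
        exact hs0 hβ0.symm
      have hone : (1 : ℝ) ≤ |(sympl β0 α : ℝ)| := by
        have := Int.one_le_abs hn
        calc (1:ℝ) = ((1:ℤ):ℝ) := by norm_num
          _ ≤ ((|sympl β0 α| : ℤ) : ℝ) := by exact_mod_cast this
          _ = |(sympl β0 α : ℝ)| := by push_cast; ring
      nlinarith [apply_nonneg p (latticeEmb δ)]
    linarith
  intro β
  rw [key β, hsval]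
end

section
/- Let ‖·‖ be a norm on ℝ² given as a finite sum ‖v‖ = Σᵢ |Φᵢ(v)| of absolute values of nonzero linear functionals Φᵢ : ℝ² → ℝ. Then any ball B = {v : ‖v‖ ≤ s} with s > 0 is a compact, convex, balanced (B = -B) set, and every extreme point (vertex) of B lies on the kernel line of some Φᵢ. -/
private lemma abs_add_small (a c : ℝ) (ha : a ≠ 0) (h : |c| ≤ |a|) :
    |a + c| = |a| + (if 0 < a then c else -c) := by
  rcases lt_trichotomy a 0 with h0 | h0 | h0
  · rw [if_neg (by linarith)]
    have h1 : c ≤ -a := by cases abs_cases c with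
      | inl hc => cases abs_cases a with
        | inl ha2 => linarith [hc.1, ha2.1] | inr ha2 => linarith [hc.1, ha2.1]
      | inr hc => cases abs_cases a with
        | inl ha2 => linarith [hc.1, ha2.1] | inr ha2 => linarith [hc.1, ha2.1]
    rw [abs_of_nonpos (by linarith), abs_of_neg h0]; ring
  · exact absurd h0 ha
  · rw [if_pos h0]
    have h1 : -a ≤ c := by
      have := neg_abs_le c
      rw [abs_of_pos h0] at h; linarith
    rw [abs_of_nonneg (by linarith), abs_of_pos h0]

private lemma phi_eval {m : ℕ} (φ : Fin m → (ℝ × ℝ) →ₗ[ℝ] ℝ) (i : Fin m) (a b : ℝ) :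
    φ i (a, b) = a * φ i (1, 0) + b * φ i (0, 1) := by
  have : (a, b) = a • ((1:ℝ), (0:ℝ)) + b • ((0:ℝ), (1:ℝ)) := by
    simp [Prod.ext_iff]
  rw [this, map_add, map_smul, map_smul]; simp

/-- Let `‖v‖ = ∑ i, |Φᵢ v|` be a norm on `ℝ²`, where the `Φᵢ` are nonzero linear
functionals. Then every ball `B = {v : ‖v‖ ≤ s}` with `s > 0` is compact, convex and
balanced (`B = -B`), and every extreme point of `B` lies on the kernel line of some `Φᵢ`. -/
theorem stmt_4 {n : ℕ} (Φ : Fin n → (ℝ × ℝ) →ₗ[ℝ] ℝ) (hΦ : ∀ i, Φ i ≠ 0)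
    (hnorm : ∀ v : ℝ × ℝ, (∑ i, |Φ i v|) = 0 → v = 0)
    (s : ℝ) (hs : 0 < s) :
    IsCompact {v : ℝ × ℝ | ∑ i, |Φ i v| ≤ s} ∧
    Convex ℝ {v : ℝ × ℝ | ∑ i, |Φ i v| ≤ s} ∧
    {v : ℝ × ℝ | ∑ i, |Φ i v| ≤ s} = -{v : ℝ × ℝ | ∑ i, |Φ i v| ≤ s} ∧
    ∀ v ∈ Set.extremePoints ℝ {v : ℝ × ℝ | ∑ i, |Φ i v| ≤ s}, ∃ i, Φ i v = 0 := by
  refine ⟨?_, ?_, ?_, ?_⟩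
  · -- compactness
    set F : (ℝ × ℝ) →ₗ[ℝ] (Fin n → ℝ) := LinearMap.pi Φ with hF
    have hker : LinearMap.ker F = ⊥ := by
      rw [LinearMap.ker_eq_bot']
      intro v hv
      apply hnorm
      have : ∀ i, Φ i v = 0 := fun i => congrFun hv i
      simp [this]
    have hemb := LinearMap.isClosedEmbedding_of_injective hker
    have hset : {v : ℝ × ℝ | ∑ i, |Φ i v| ≤ s} = F ⁻¹' {w : Fin n → ℝ | ∑ i, |w i| ≤ s} := by
      rfl
    rw [hset]
    apply hemb.isCompact_preimage
    have hsub : {w : Fin n → ℝ | ∑ i, |w i| ≤ s} ⊆ Set.pi Set.univ (fun _ => Set.Icc (-s) s) := by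
      intro w hw i _
      have h1 : |w i| ≤ ∑ j, |w j| :=
        Finset.single_le_sum (fun j _ => abs_nonneg (w j)) (Finset.mem_univ i)
      have := le_trans h1 hw
      exact abs_le.mp this
    have hclosed : IsClosed {w : Fin n → ℝ | ∑ i, |w i| ≤ s} := by
      apply isClosed_le _ continuous_const
      exact continuous_finset_sum _ fun i _ => (continuous_apply i).abs
    exact (isCompact_univ_pi fun _ => isCompact_Icc).of_isClosed_subset hclosed hsub
  · -- convexity
    intro x hx y hy a b ha hb hab
    simp only [Set.mem_setOf_eq] at *
    calc ∑ i, |Φ i (a • x + b • y)| ≤ ∑ i, (a * |Φ i x| + b * |Φ i y|) := by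
          apply Finset.sum_le_sum
          intro i _
          rw [map_add, map_smul, map_smul]
          calc |a • Φ i x + b • Φ i y| ≤ |a • Φ i x| + |b • Φ i y| := abs_add_le _ _
            _ = a * |Φ i x| + b * |Φ i y| := by
                simp [smul_eq_mul, abs_mul, abs_of_nonneg ha, abs_of_nonneg hb]
      _ = a * ∑ i, |Φ i x| + b * ∑ i, |Φ i y| := by
          rw [Finset.sum_add_distrib, Finset.mul_sum, Finset.mul_sum]
      _ ≤ a * s + b * s := by
          apply add_le_add (mul_le_mul_of_nonneg_left hx ha) (mul_le_mul_of_nonneg_left hy hb)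
      _ = s := by rw [← add_mul, hab, one_mul]
  · -- balanced
    ext v
    simp only [Set.mem_neg, Set.mem_setOf_eq, map_neg, abs_neg]
  · -- extreme points
    intro v hv
    by_contra hcon
    push_neg at hcon
    have hn : n ≠ 0 := by
      rintro rfl
      have := hnorm (1, 0) (by simp)
      simp [Prod.ext_iff] at this
    have hne : Nonempty (Fin n) := ⟨⟨0, Nat.pos_of_ne_zero hn⟩⟩
    rw [mem_extremePoints] at hv
    obtain ⟨hvB, hvE⟩ := hv
    set e : Fin n → ℝ := fun i => if 0 < Φ i v then 1 else -1 with he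
    -- key expansion lemma
    have key : ∀ u : ℝ × ℝ, (∀ i, |Φ i u| ≤ |Φ i v|) →
        (∑ i, |Φ i (v + u)|) = (∑ i, |Φ i v|) + ∑ i, e i * Φ i u := by
      intro u hu
      rw [← Finset.sum_add_distrib]
      apply Finset.sum_congr rfl
      intro i _
      rw [map_add, abs_add_small _ _ (hcon i) (hu i)]
      by_cases h0 : 0 < Φ i v
      · simp [he, h0]
      · simp [he, h0]; try ring
    set p : ℝ := ∑ i, e i * Φ i (1, 0) with hp
    set q : ℝ := ∑ i, e i * Φ i (0, 1) with hq
    set w : ℝ × ℝ := if p = 0 ∧ q = 0 then (1, 0) else (q, -p) with hw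
    have hLw : (∑ i, e i * Φ i w) = 0 := by
      by_cases h : p = 0 ∧ q = 0
      · rw [hw, if_pos h]; rw [hp] at h; exact h.1
      · rw [hw, if_neg h]
        have : ∀ i, Φ i (q, -p) = q * Φ i (1,0) + (-p) * Φ i (0,1) := fun i => phi_eval Φ i q (-p)
        calc (∑ i, e i * Φ i (q, -p))
            = ∑ i, (q * (e i * Φ i (1,0)) + (-p) * (e i * Φ i (0,1))) := by
              apply Finset.sum_congr rfl; intro i _; rw [this i]; ring
          _ = q * p + (-p) * q := by
              rw [Finset.sum_add_distrib, ← Finset.mul_sum, ← Finset.mul_sum, hp, hq]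
          _ = 0 := by ring
    have hw0 : w ≠ 0 := by
      by_cases h : p = 0 ∧ q = 0
      · rw [hw, if_pos h]; simp [Prod.ext_iff]
      · rw [hw, if_neg h]
        intro hc
        rw [Prod.ext_iff] at hc
        simp only [Prod.fst_zero, Prod.snd_zero, neg_eq_zero] at hc
        exact h ⟨hc.2, hc.1⟩
    -- choose t
    set t : ℝ := Finset.univ.inf' (Finset.univ_nonempty) (fun i => |Φ i v| / (|Φ i w| + 1)) with ht
    have htpos : 0 < t := by
      rw [ht, Finset.lt_inf'_iff]
      intro i _
      apply div_pos (abs_pos.mpr (hcon i))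
      positivity
    have htbound : ∀ i, |Φ i (t • w)| ≤ |Φ i v| := by
      intro i
      rw [map_smul, smul_eq_mul, abs_mul, abs_of_pos htpos]
      have h1 : t ≤ |Φ i v| / (|Φ i w| + 1) := Finset.inf'_le _ (Finset.mem_univ i)
      calc t * |Φ i w| ≤ (|Φ i v| / (|Φ i w| + 1)) * |Φ i w| :=
            mul_le_mul_of_nonneg_right h1 (abs_nonneg _)
        _ ≤ |Φ i v| := by
            rw [div_mul_eq_mul_div, div_le_iff₀ (by positivity)]
            nlinarith [abs_nonneg (Φ i w), abs_nonneg (Φ i v)]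
    have hsum1 : (∑ i, |Φ i (v + t • w)|) ≤ s := by
      rw [key (t • w) htbound]
      have : (∑ i, e i * Φ i (t • w)) = t * ∑ i, e i * Φ i w := by
        rw [Finset.mul_sum]
        apply Finset.sum_congr rfl
        intro i _
        rw [map_smul, smul_eq_mul]; ring
      rw [this, hLw, mul_zero, add_zero]
      exact hvB
    have hsum2 : (∑ i, |Φ i (v - t • w)|) ≤ s := by
      have heq : v - t • w = v + (-(t • w)) := by ring
      rw [heq, key (-(t • w)) (by intro i; rw [map_neg, abs_neg]; exact htbound i)]
      have : (∑ i, e i * Φ i (-(t • w))) = -(t * ∑ i, e i * Φ i w) := by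
        rw [Finset.mul_sum, ← Finset.sum_neg_distrib]
        apply Finset.sum_congr rfl
        intro i _
        rw [map_neg, map_smul, smul_eq_mul]; ring
      rw [this, hLw, mul_zero, neg_zero, add_zero]
      exact hvB
    have hmem : v ∈ openSegment ℝ (v + t • w) (v - t • w) := by
      refine ⟨1/2, 1/2, by norm_num, by norm_num, by norm_num, ?_⟩
      module
    have := hvE (v + t • w) hsum1 (v - t • w) hsum2 hmem
    have h1 : t • w = 0 := by
      have := this.1
      have h2 : v + t • w = v + 0 := by rw [add_zero]; exact this
      exact add_left_cancel h2
    exact hw0 ((smul_eq_zero.mp h1).resolve_left (ne_of_gt htpos))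
end

section
/- Let Γ be a finitely generated group, ρ : Γ → PSL₂(ℂ) a homomorphism whose image is an irreducible subgroup, and suppose h ∈ Γ generates a normal cyclic subgroup of Γ. If ρ(h) ≠ ±I, then ρ(h) is diagonalizable (not parabolic), and there is a subgroup Γ₀ ≤ Γ of index at most 2 such that ρ(Γ₀) is abelian. -/
open Matrix

/-- `SL₂(ℂ)`. -/
abbrev SL2C := Matrix.SpecialLinearGroup (Fin 2) ℂ

/-- `PSL₂(ℂ) = SL₂(ℂ)/{±I}`, the quotient of `SL₂(ℂ)` by its center. -/
abbrev PSL2C := SL2C ⧸ Subgroup.center SL2C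

/-- The class in `PSL₂(ℂ)` of the diagonal matrix `diag(z, z⁻¹)`. -/
def diagClass (z : ℂˣ) : PSL2C :=
  QuotientGroup.mk ⟨!![(z : ℂ), 0; 0, ((z⁻¹ : ℂˣ) : ℂ)], by
    simp [Matrix.det_fin_two_of]⟩

/-- The class in `PSL₂(ℂ)` of the antidiagonal matrix `[[0, w], [-w⁻¹, 0]]`. -/
def antidiagClass (w : ℂˣ) : PSL2C :=
  QuotientGroup.mk ⟨!![0, (w : ℂ); -((w⁻¹ : ℂˣ) : ℂ), 0], by
    simp [Matrix.det_fin_two_of]⟩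

/-- The class in `PSL₂(ℂ)` of the upper triangular matrix `[[a, b], [0, a⁻¹]]`. -/
def upperClass (a : ℂˣ) (b : ℂ) : PSL2C :=
  QuotientGroup.mk ⟨!![(a : ℂ), b; 0, ((a⁻¹ : ℂˣ) : ℂ)], by
    simp [Matrix.det_fin_two_of]⟩

/-- A nontrivial element of `PSL₂(ℂ)` is parabolic if it is the class of a matrix of
trace `±2` (equivalently, of a representative of trace `2`). -/
def IsParabolic (x : PSL2C) : Prop :=
  x ≠ 1 ∧ ∃ A : SL2C, (QuotientGroup.mk A : PSL2C) = x ∧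
    Matrix.trace (A : Matrix (Fin 2) (Fin 2) ℂ) = 2

/-! ### Auxiliary infrastructure -/

instance : Fact (Even (Fintype.card (Fin 2))) := ⟨⟨1, rfl⟩⟩

theorem coe_neg_one' : ((-1 : SL2C) : Matrix (Fin 2) (Fin 2) ℂ) = -1 := by
  rw [show (-1 : SL2C) = -(1 : SL2C) from rfl, Matrix.SpecialLinearGroup.coe_neg]
  simp

theorem mem_center_iff' (A : SL2C) : A ∈ Subgroup.center SL2C ↔ A = 1 ∨ A = -1 := by
  rw [Matrix.SpecialLinearGroup.mem_center_iff]
  constructor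
  · rintro ⟨r, hr, hA⟩
    rw [Fintype.card_fin] at hr
    have h2 : (r - 1) * (r + 1) = 0 := by linear_combination hr
    rcases mul_eq_zero.mp h2 with h | h
    · left
      have hr1 : r = 1 := by linear_combination h
      subst hr1
      apply Subtype.ext
      rw [← hA]; simp
    · right
      have hr1 : r = -1 := by linear_combination h
      subst hr1
      apply Subtype.ext
      rw [← hA, coe_neg_one']
      ext i j
      by_cases hij : i = j <;> simp [Matrix.scalar, hij, Matrix.one_apply, Matrix.diagonal_apply]
  · rintro (rfl | rfl)
    · exact ⟨1, by simp⟩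
    · refine ⟨-1, by norm_num, ?_⟩
      rw [coe_neg_one']
      ext i j
      by_cases hij : i = j <;> simp [Matrix.scalar, hij, Matrix.one_apply, Matrix.diagonal_apply]

theorem mk_eq_mk_iff (X Y : SL2C) :
    (QuotientGroup.mk X : PSL2C) = QuotientGroup.mk Y ↔ X = Y ∨ X = -Y := by
  rw [QuotientGroup.eq, mem_center_iff']
  constructor
  · rintro (hc | hc)
    · left
      have := congrArg (X * ·) hc
      simp only [mul_one] at this
      rw [← mul_assoc, mul_inv_cancel, one_mul] at this
      exact this.symm
    · right
      have := congrArg (X * ·) hc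
      rw [← mul_assoc, mul_inv_cancel, one_mul, mul_neg, mul_one] at this
      rw [this]; simp
  · rintro (rfl | rfl)
    · simp
    · right; simp [mul_neg]

theorem sl2_det (A : SL2C) : A.1 0 0 * A.1 1 1 - A.1 0 1 * A.1 1 0 = 1 := by
  have := A.2; rwa [Matrix.det_fin_two] at this

theorem sl2_ext (A B : SL2C) (h00 : A.1 0 0 = B.1 0 0) (h01 : A.1 0 1 = B.1 0 1)
    (h10 : A.1 1 0 = B.1 1 0) (h11 : A.1 1 1 = B.1 1 1) : A = B := by
  apply Subtype.ext; ext i j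
  fin_cases i <;> fin_cases j <;> assumption

theorem sl2_mul (A B : SL2C) (i j : Fin 2) :
    (A * B).1 i j = A.1 i 0 * B.1 0 j + A.1 i 1 * B.1 1 j := by
  rw [Matrix.SpecialLinearGroup.coe_mul, Matrix.mul_apply, Fin.sum_univ_two]

theorem sl2_inv (A : SL2C) :
    A⁻¹.1 = !![A.1 1 1, -A.1 0 1; -A.1 1 0, A.1 0 0] := by
  rw [Matrix.SpecialLinearGroup.SL2_inv_expl]
  ext i j
  fin_cases i <;> fin_cases j <;> rfl

theorem sl2_neg (A : SL2C) (i j : Fin 2) : (-A).1 i j = -(A.1 i j) := by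
  rw [Matrix.SpecialLinearGroup.coe_neg]; simp

def dgS (z : ℂˣ) : SL2C :=
  ⟨!![(z : ℂ), 0; 0, ((z⁻¹ : ℂˣ) : ℂ)], by simp [Matrix.det_fin_two_of]⟩

def adS (w : ℂˣ) : SL2C :=
  ⟨!![0, (w : ℂ); -((w⁻¹ : ℂˣ) : ℂ), 0], by simp [Matrix.det_fin_two_of]⟩

def upU (u : ℂ) : SL2C := ⟨!![1, u; 0, 1], by simp [Matrix.det_fin_two_of]⟩

def mkSL (M : Matrix (Fin 2) (Fin 2) ℂ) (h : M.det = 1) : SL2C := ⟨M, h⟩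

@[simp] theorem mkSL_val (M : Matrix (Fin 2) (Fin 2) ℂ) (h : M.det = 1) : (mkSL M h).1 = M := rfl

theorem diagClass_eq (z : ℂˣ) : diagClass z = QuotientGroup.mk (dgS z) := rfl
theorem antidiagClass_eq (w : ℂˣ) : antidiagClass w = QuotientGroup.mk (adS w) := rfl

/-- unipotent upper triangular subgroup -/
def UnipSL : Subgroup SL2C where
  carrier := {A | A.1 1 0 = 0 ∧ A.1 0 0 = 1 ∧ A.1 1 1 = 1}
  one_mem' := by norm_num
  mul_mem' := by
    rintro A B ⟨h1, h2, h3⟩ ⟨g1, g2, g3⟩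
    refine ⟨?_, ?_, ?_⟩ <;> rw [sl2_mul] <;> simp [h1, h2, h3, g1, g2, g3]
  inv_mem' := by
    rintro A ⟨h1, h2, h3⟩
    refine ⟨?_, ?_, ?_⟩ <;> rw [sl2_inv] <;> simp [h1, h2, h3]

/-- diagonal subgroup -/
def DiagSL : Subgroup SL2C where
  carrier := {A | A.1 1 0 = 0 ∧ A.1 0 1 = 0}
  one_mem' := by norm_num
  mul_mem' := by
    rintro A B ⟨h1, h2⟩ ⟨g1, g2⟩
    constructor <;> rw [sl2_mul] <;> simp [h1, h2, g1, g2]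
  inv_mem' := by
    rintro A ⟨h1, h2⟩
    constructor <;> rw [sl2_inv] <;> simp [h1, h2]

theorem neg_mem_DiagSL {A : SL2C} (hA : A ∈ DiagSL) : -A ∈ DiagSL := by
  obtain ⟨h1, h2⟩ := hA
  exact ⟨by rw [sl2_neg, h1, neg_zero], by rw [sl2_neg, h2, neg_zero]⟩

theorem upU_mem_UnipSL (u : ℂ) : upU u ∈ UnipSL := by
  refine ⟨?_, ?_, ?_⟩ <;> simp [upU]

theorem dgS_mem_DiagSL (z : ℂˣ) : dgS z ∈ DiagSL := by
  constructor <;> simp [dgS]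

/-- trace is invariant under conjugation -/
theorem trace_conj_eq (B U V : SL2C) (hc : B * U * B⁻¹ = V) :
    Matrix.trace (V : Matrix (Fin 2) (Fin 2) ℂ) =
      Matrix.trace (U : Matrix (Fin 2) (Fin 2) ℂ) := by
  have h2 : B⁻¹ * (B * U) = U := by group
  have h3 : (B⁻¹).1 * ((B * U)).1 = U.1 := by
    rw [← Matrix.SpecialLinearGroup.coe_mul, h2]
  calc Matrix.trace (V : Matrix (Fin 2) (Fin 2) ℂ)
      = Matrix.trace ((B * U).1 * (B⁻¹).1) := by
        rw [← hc, Matrix.SpecialLinearGroup.coe_mul]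
    _ = Matrix.trace ((B⁻¹).1 * (B * U).1) := Matrix.trace_mul_comm _ _
    _ = Matrix.trace (U : Matrix (Fin 2) (Fin 2) ℂ) := by rw [h3]

theorem trace_of_UnipSL {W : SL2C} (hW : W ∈ UnipSL) :
    Matrix.trace (W : Matrix (Fin 2) (Fin 2) ℂ) = 2 := by
  obtain ⟨h1, h2, h3⟩ := hW
  rw [Matrix.trace_fin_two, h2, h3]; norm_num

/-- parabolic normal form -/
theorem parabolic_normal_form (A : SL2C) (hA : A ≠ 1)
    (htr : Matrix.trace (A : Matrix (Fin 2) (Fin 2) ℂ) = 2) :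
    ∃ C : SL2C, ∃ u : ℂ, u ≠ 0 ∧ C * A = upU u * C := by
  set a := A.1 0 0 with ha
  set b := A.1 0 1 with hb
  set c := A.1 1 0 with hc
  set d := A.1 1 1 with hd
  have hdet : a * d - b * c = 1 := sl2_det A
  have htr2 : a + d = 2 := by
    rw [Matrix.trace_fin_two] at htr; exact htr
  by_cases hc0 : c = 0
  · have ha1 : a = 1 := by
      have hsq : (a - 1) ^ 2 = 0 := by linear_combination -hdet + a*htr2 - b*hc0
      have := pow_eq_zero_iff (n := 2) two_ne_zero |>.mp hsq
      have := sub_eq_zero.mp this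
      linear_combination this
    have hd1 : d = 1 := by linear_combination htr2 - ha1
    have hb0 : b ≠ 0 := by
      intro hb0
      apply hA
      apply sl2_ext <;>
        simp [← ha, ← hb, ← hc, ← hd] at * <;> simp [ha1, hd1, hb0, hc0]
    refine ⟨1, b, hb0, ?_⟩
    rw [one_mul, mul_one]
    apply sl2_ext <;> simp [upU, ← ha, ← hb, ← hc, ← hd, ha1, hd1, hc0]
  · refine ⟨mkSL !![0, -c⁻¹; c, 1 - a] (by
      rw [Matrix.det_fin_two_of, zero_mul, zero_sub, neg_mul, neg_neg]; exact inv_mul_cancel₀ hc0), -c⁻¹, by simp [hc0], ?_⟩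
    apply sl2_ext <;> rw [sl2_mul, sl2_mul] <;>
        simp [upU, ← ha, ← hb, ← hc, ← hd]
    · field_simp
      linear_combination (-1 : ℂ) * htr2
    · ring
    · linear_combination htr2 - hdet

/-- diagonalizable normal form -/
theorem diag_normal_form (A : SL2C)
    (h2 : Matrix.trace (A : Matrix (Fin 2) (Fin 2) ℂ) ≠ 2)
    (hm2 : Matrix.trace (A : Matrix (Fin 2) (Fin 2) ℂ) ≠ -2) :
    ∃ M : SL2C, ∃ z : ℂˣ, (z : ℂ) ^ 2 ≠ 1 ∧ A * M = M * dgS z := by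
  rw [Matrix.trace_fin_two] at h2 hm2
  set a := A.1 0 0 with ha
  set b := A.1 0 1 with hb
  set c := A.1 1 0 with hc
  set d := A.1 1 1 with hd
  have hdet : a * d - b * c = 1 := sl2_det A
  by_cases hb0 : b = 0
  · have had : a * d = 1 := by linear_combination hdet + c * hb0
    have ha0 : a ≠ 0 := left_ne_zero_of_mul_eq_one had
    have hdinv : d = a⁻¹ := by field_simp; linear_combination had
    have ha2 : a ^ 2 ≠ 1 := by
      intro h1
      have hda : d = a := by rw [hdinv]; field_simp; linear_combination -h1
      rcases mul_self_eq_one_iff.mp (by linear_combination h1 : a * a = 1) with hh | hh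
      · exact h2 (by rw [hda, hh]; norm_num)
      · exact hm2 (by rw [hda, hh]; norm_num)
    have hand : a - d ≠ 0 := by
      intro h0
      exact ha2 (by have := sub_eq_zero.mp h0; rw [← this] at had; linear_combination had)
    set za : ℂˣ := Units.mk0 a ha0 with hza
    by_cases hc0 : c = 0
    · refine ⟨1, za, ha2, ?_⟩
      rw [mul_one, one_mul]
      apply sl2_ext <;> simp [dgS, ← ha, ← hb, ← hc, ← hd, hza, hb0, hc0, hdinv]
    · refine ⟨mkSL !![a - d, 0; c, (a - d)⁻¹] (by
        rw [Matrix.det_fin_two_of, zero_mul, sub_zero]; exact mul_inv_cancel₀ hand), za, ha2, ?_⟩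
      apply sl2_ext <;> rw [sl2_mul, sl2_mul] <;>
          simp [dgS, ← ha, ← hb, ← hc, ← hd, hza, hb0]
      · ring
      · ring
      · rw [hdinv]; ring
  · obtain ⟨s, hs⟩ := IsAlgClosed.exists_pow_nat_eq ((a + d) ^ 2 - 4) two_pos
    set t := a + d with ht
    set l := (t + s) / 2 with hl
    have heq : l ^ 2 - t * l + 1 = 0 := by
      rw [hl]; linear_combination (1/4) * hs
    have hl0 : l ≠ 0 := by
      intro h0; rw [h0] at heq; simp at heq
    have hlinv : t - l = l⁻¹ := by
      field_simp; linear_combination -heq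
    have hl2 : l ^ 2 ≠ 1 := by
      intro h1
      rcases mul_self_eq_one_iff.mp (by linear_combination h1 : l * l = 1) with hh | hh
      · exact h2 (by linear_combination -heq + (l + 1 - t) * hh)
      · exact hm2 (by linear_combination heq + (t + 1 - l) * hh)
    have hll : l⁻¹ - l ≠ 0 := by
      intro h0
      have h1 : l⁻¹ = l := sub_eq_zero.mp h0
      exact hl2 (by rw [pow_two]; nth_rewrite 2 [← h1]; exact mul_inv_cancel₀ hl0)
    set zl : ℂˣ := Units.mk0 l hl0 with hzl
    set k := (b * (l⁻¹ - l))⁻¹ with hk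
    have hli : l * l⁻¹ = 1 := mul_inv_cancel₀ hl0
    have heq' : (l⁻¹) ^ 2 - t * l⁻¹ + 1 = 0 := by
      linear_combination (l⁻¹) ^ 2 * heq + (t * l⁻¹ - l⁻¹ * l - 1) * hli
    have hbl : b * (l⁻¹ - l) ≠ 0 := mul_ne_zero hb0 hll
    have hkinv : b * (l⁻¹ - l) * k = 1 := by rw [hk]; exact mul_inv_cancel₀ hbl
    refine ⟨mkSL !![b, b * k; l - a, (l⁻¹ - a) * k] (by
      simp [Matrix.det_fin_two_of]; linear_combination hkinv), zl, hl2, ?_⟩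
    apply sl2_ext <;> rw [sl2_mul, sl2_mul] <;>
        simp [dgS, ← ha, ← hb, ← hc, ← hd, hzl]
    · ring
    · ring
    · linear_combination -heq - hdet
    · linear_combination k * (-heq') - k * hdet

/-- conjugating into a power of a unipotent forces upper-triangularity -/
theorem unip_conj (B W : SL2C) (u : ℂ) (hu : u ≠ 0) (hW : W ∈ UnipSL)
    (hc : B * upU u * B⁻¹ = W ∨ B * upU u * B⁻¹ = -W) : B.1 1 0 = 0 := by
  have hV : B * upU u * B⁻¹ = W := by
    rcases hc with hc | hc
    · exact hc
    · exfalso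
      have h1 := trace_conj_eq B (upU u) (-W) hc
      have h2 : Matrix.trace ((upU u) : Matrix (Fin 2) (Fin 2) ℂ) = 2 :=
        trace_of_UnipSL (upU_mem_UnipSL u)
      have h3 : Matrix.trace ((-W : SL2C) : Matrix (Fin 2) (Fin 2) ℂ) = -2 := by
        rw [Matrix.trace_fin_two, sl2_neg, sl2_neg, hW.2.1, hW.2.2]; norm_num
      rw [h2, h3] at h1
      norm_num at h1
  have hBU : B * upU u = W * B := by
    rw [← hV]; group
  have := congrArg (fun X : SL2C => X.1 1 1) hBU
  simp only [sl2_mul] at this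
  obtain ⟨w1, w2, w3⟩ := hW
  rw [w1] at this
  simp [upU, w3] at this
  rcases this with h | h
  · exact h
  · exact absurd h hu

/-- conjugating into the diagonal forces (anti)diagonality -/
theorem diag_conj (B W : SL2C) (z : ℂˣ) (hz2 : (z : ℂ) ^ 2 ≠ 1) (hW : W ∈ DiagSL)
    (hc : B * dgS z * B⁻¹ = W ∨ B * dgS z * B⁻¹ = -W) :
    (B.1 1 0 = 0 ∧ B.1 0 1 = 0) ∨ (B.1 0 0 = 0 ∧ B.1 1 1 = 0) := by
  have hW' : ∃ V : SL2C, V ∈ DiagSL ∧ B * dgS z * B⁻¹ = V := by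
    rcases hc with hc | hc
    · exact ⟨W, hW, hc⟩
    · exact ⟨-W, neg_mem_DiagSL hW, hc⟩
  obtain ⟨V, hVd, hV⟩ := hW'
  have hBV : B * dgS z = V * B := by rw [← hV]; group
  obtain ⟨v10, v01⟩ := hVd
  have hz0 : (z : ℂ) ≠ 0 := z.ne_zero
  have hzz : (z : ℂ) - ((z : ℂ))⁻¹ ≠ 0 := by
    intro h0
    have h1 : (z : ℂ) = ((z : ℂ))⁻¹ := sub_eq_zero.mp h0
    exact hz2 (by rw [pow_two]; nth_rewrite 2 [h1]; exact mul_inv_cancel₀ hz0)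
  have e00 := congrArg (fun X : SL2C => X.1 0 0) hBV
  have e01 := congrArg (fun X : SL2C => X.1 0 1) hBV
  have e10 := congrArg (fun X : SL2C => X.1 1 0) hBV
  have e11 := congrArg (fun X : SL2C => X.1 1 1) hBV
  simp only [sl2_mul] at e00 e01 e10 e11
  simp [dgS, v10, v01] at e00 e01 e10 e11
  -- e00 : B00 * z = V00 * B00, e01 : B01 * z⁻¹ = V00 * B01
  -- e10 : B10 * z = V11 * B10, e11 : B11 * z⁻¹ = V11 * B11
  have hdet := sl2_det B
  by_cases hB00 : B.1 0 0 = 0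
  · right
    refine ⟨hB00, ?_⟩
    have hb01 : B.1 0 1 ≠ 0 := by
      intro h0
      rw [hB00, h0] at hdet; simp at hdet
    have hb10 : B.1 1 0 ≠ 0 := by
      intro h0
      rw [hB00, h0] at hdet; simp at hdet
    have hV00 : V.1 0 0 = ((z : ℂ))⁻¹ := by
      have := mul_right_cancel₀ hb01 (by linear_combination e01 :
        ((z : ℂ))⁻¹ * B.1 0 1 = V.1 0 0 * B.1 0 1)
      exact this.symm
    have hV11 : V.1 1 1 = (z : ℂ) := by
      have := mul_right_cancel₀ hb10 (by linear_combination e10 :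
        (z : ℂ) * B.1 1 0 = V.1 1 1 * B.1 1 0)
      exact this.symm
    by_contra hB11
    have : ((z : ℂ))⁻¹ = (z : ℂ) := by
      have := mul_right_cancel₀ hB11 (by rw [hV11] at e11; linear_combination e11 :
        ((z : ℂ))⁻¹ * B.1 1 1 = (z : ℂ) * B.1 1 1)
      exact this
    exact hzz (by linear_combination -this)
  · left
    have hV00 : V.1 0 0 = (z : ℂ) := by
      have := mul_right_cancel₀ hB00 (by linear_combination e00 :
        (z : ℂ) * B.1 0 0 = V.1 0 0 * B.1 0 0)
      exact this.symm
    have hB01 : B.1 0 1 = 0 := by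
      by_contra hB01
      have : ((z : ℂ))⁻¹ = (z : ℂ) := by
        have := mul_right_cancel₀ hB01 (by rw [hV00] at e01; linear_combination e01 :
          ((z : ℂ))⁻¹ * B.1 0 1 = (z : ℂ) * B.1 0 1)
        exact this
      exact hzz (by linear_combination -this)
    have hB11 : B.1 1 1 ≠ 0 := by
      intro h0
      rw [hB01, h0] at hdet; simp at hdet
    have hV11 : V.1 1 1 = ((z : ℂ))⁻¹ := by
      have := mul_right_cancel₀ hB11 (by linear_combination e11 :
        ((z : ℂ))⁻¹ * B.1 1 1 = V.1 1 1 * B.1 1 1)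
      exact this.symm
    refine ⟨?_, hB01⟩
    by_contra hB10
    have : (z : ℂ) = ((z : ℂ))⁻¹ := by
      have := mul_right_cancel₀ hB10 (by rw [hV11] at e10; linear_combination e10 :
        (z : ℂ) * B.1 1 0 = ((z : ℂ))⁻¹ * B.1 1 0)
      exact this
    exact hzz (by linear_combination this)

/-- an upper triangular SL2 element gives an `upperClass` in PSL2 -/
theorem mk_upper (B : SL2C) (h10 : B.1 1 0 = 0) :
    (QuotientGroup.mk B : PSL2C) ∈
      Set.range fun p : ℂˣ × ℂ => upperClass p.1 p.2 := by
  have hdet := sl2_det B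
  rw [h10] at hdet
  simp only [mul_zero, sub_zero] at hdet
  refine ⟨⟨Units.mk (B.1 0 0) (B.1 1 1) hdet (by linear_combination hdet), B.1 0 1⟩, ?_⟩
  simp only [upperClass]
  congr 1
  apply sl2_ext <;> simp [h10]

theorem mk_diag (B : SL2C) (h10 : B.1 1 0 = 0) (h01 : B.1 0 1 = 0) :
    (QuotientGroup.mk B : PSL2C) ∈ Set.range diagClass := by
  have hdet := sl2_det B
  rw [h10, h01] at hdet
  simp only [mul_zero, sub_zero, zero_mul] at hdet
  refine ⟨Units.mk (B.1 0 0) (B.1 1 1) hdet (by linear_combination hdet), ?_⟩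
  rw [diagClass_eq]
  congr 1
  apply sl2_ext <;> simp [dgS, h10, h01]

theorem mk_anti (B : SL2C) (h00 : B.1 0 0 = 0) (h11 : B.1 1 1 = 0) :
    (QuotientGroup.mk B : PSL2C) ∈ Set.range antidiagClass := by
  have hdet := sl2_det B
  rw [h00, h11] at hdet
  simp only [zero_mul, mul_zero, zero_sub, neg_eq_iff_eq_neg] at hdet
  have h1 : B.1 0 1 * (-B.1 1 0) = 1 := by linear_combination -hdet
  refine ⟨Units.mk (B.1 0 1) (-B.1 1 0) h1 (by linear_combination -hdet), ?_⟩
  rw [antidiagClass_eq]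
  congr 1
  apply sl2_ext <;> simp [adS, h00, h11]

theorem dgS_mul (z w : ℂˣ) : dgS z * dgS w = dgS (z * w) := by
  apply sl2_ext <;> rw [sl2_mul] <;> simp [dgS] <;> ring

theorem diagClass_mul (z w : ℂˣ) : diagClass z * diagClass w = diagClass (z * w) := by
  rw [diagClass_eq, diagClass_eq, diagClass_eq, ← QuotientGroup.mk_mul, dgS_mul]

theorem diag_ne_anti (z w : ℂˣ) : diagClass z ≠ antidiagClass w := by
  rw [diagClass_eq, antidiagClass_eq]
  intro hc
  rcases (mk_eq_mk_iff _ _).mp hc with hc | hc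
  · have := congrArg (fun X : SL2C => X.1 0 0) hc
    simp [dgS, adS] at this
  · have := congrArg (fun X : SL2C => X.1 0 0) hc
    simp only [sl2_neg] at this
    simp [dgS, adS] at this

theorem not_mem_anti_of_mem_diag {x : PSL2C} (hd : x ∈ Set.range diagClass)
    (ha : x ∈ Set.range antidiagClass) : False := by
  obtain ⟨z, rfl⟩ := hd
  obtain ⟨w, hw⟩ := ha
  exact diag_ne_anti z w hw.symm

theorem mul_class_mem :
    (∀ x y : PSL2C, x ∈ Set.range diagClass → y ∈ Set.range diagClass →
      x * y ∈ Set.range diagClass) ∧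
    (∀ x y : PSL2C, x ∈ Set.range diagClass → y ∈ Set.range antidiagClass →
      x * y ∈ Set.range antidiagClass) ∧
    (∀ x y : PSL2C, x ∈ Set.range antidiagClass → y ∈ Set.range diagClass →
      x * y ∈ Set.range antidiagClass) ∧
    (∀ x y : PSL2C, x ∈ Set.range antidiagClass → y ∈ Set.range antidiagClass →
      x * y ∈ Set.range diagClass) := by
  have hdd : ∀ z w : ℂˣ, dgS z * dgS w = dgS (z * w) := dgS_mul
  have hda : ∀ z w : ℂˣ, dgS z * adS w = adS (z * w) := by
    intro z w
    apply sl2_ext <;> rw [sl2_mul] <;> simp [dgS, adS] <;> ring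
  have had : ∀ w z : ℂˣ, adS w * dgS z = adS (w * z⁻¹) := by
    intro w z
    apply sl2_ext <;> rw [sl2_mul] <;> simp [dgS, adS] <;> ring
  have haa : ∀ w v : ℂˣ, adS w * adS v = dgS (-(w * v⁻¹)) := by
    intro w v
    apply sl2_ext <;> rw [sl2_mul] <;> simp [dgS, adS] <;> ring
  refine ⟨?_, ?_, ?_, ?_⟩ <;> rintro x y ⟨z, rfl⟩ ⟨w, rfl⟩
  · exact ⟨z * w, by rw [diagClass_eq, diagClass_eq, diagClass_eq,
      ← QuotientGroup.mk_mul, hdd]⟩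
  · exact ⟨z * w, by rw [diagClass_eq, antidiagClass_eq, antidiagClass_eq,
      ← QuotientGroup.mk_mul, hda]⟩
  · exact ⟨z * w⁻¹, by rw [antidiagClass_eq, diagClass_eq, antidiagClass_eq,
      ← QuotientGroup.mk_mul, had]⟩
  · exact ⟨-(z * w⁻¹), by rw [antidiagClass_eq, antidiagClass_eq, diagClass_eq,
      ← QuotientGroup.mk_mul, haa]⟩

/-- Let `Γ` be a finitely generated group, `ρ : Γ → PSL₂(ℂ)` a homomorphism with
irreducible image, and `h ∈ Γ` a generator of a normal cyclic subgroup of `Γ`. If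
`ρ(h) ≠ ±I`, then `ρ(h)` is diagonalizable (not parabolic) and there is a subgroup
`Γ₀ ≤ Γ` of index at most 2 with `ρ(Γ₀)` abelian. -/
theorem stmt_16 {Γ : Type*} [Group Γ] (hfg : Group.FG Γ) (ρ : Γ →* PSL2C)
    (hirr : ¬ ∃ g : PSL2C, ∀ γ : Γ,
      g * ρ γ * g⁻¹ ∈ Set.range fun p : ℂˣ × ℂ => upperClass p.1 p.2)
    (h : Γ) (hnorm : (Subgroup.zpowers h).Normal)
    (hρh : ρ h ≠ 1) :
    (¬ IsParabolic (ρ h)) ∧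
    (∃ g : PSL2C, g * ρ h * g⁻¹ ∈ Set.range diagClass) ∧
    ∃ Γ₀ : Subgroup Γ, (Γ₀.index = 1 ∨ Γ₀.index = 2) ∧
      ∀ a ∈ Γ₀, ∀ b ∈ Γ₀, ρ a * ρ b = ρ b * ρ a := by
  have key : ∀ γ : Γ, ∃ n : ℤ, ρ γ * ρ h * (ρ γ)⁻¹ = (ρ h) ^ n := by
    intro γ
    obtain ⟨n, hn⟩ := hnorm.conj_mem h (Subgroup.mem_zpowers h) γ
    refine ⟨n, ?_⟩
    have h2 := congrArg ρ hn
    simp only [MonoidHom.map_mul, MonoidHom.map_inv, MonoidHom.map_zpow] at h2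
    exact h2.symm
  -- the generic conjugated relation
  have conjrel : ∀ (C : SL2C) (γ : Γ), ∃ n : ℤ,
      (QuotientGroup.mk C * ρ γ * (QuotientGroup.mk C)⁻¹) *
        (QuotientGroup.mk C * ρ h * (QuotientGroup.mk C)⁻¹) *
        (QuotientGroup.mk C * ρ γ * (QuotientGroup.mk C)⁻¹)⁻¹ =
      (QuotientGroup.mk C * ρ h * (QuotientGroup.mk C)⁻¹) ^ n := by
    intro C γ
    obtain ⟨n, hn⟩ := key γ
    refine ⟨n, ?_⟩
    have e1 : (QuotientGroup.mk C : PSL2C) * ρ γ * (QuotientGroup.mk C)⁻¹ *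
        ((QuotientGroup.mk C) * ρ h * (QuotientGroup.mk C)⁻¹) *
        ((QuotientGroup.mk C) * ρ γ * (QuotientGroup.mk C)⁻¹)⁻¹ =
        (QuotientGroup.mk C) * (ρ γ * ρ h * (ρ γ)⁻¹) * (QuotientGroup.mk C)⁻¹ := by
      group
    have e2 : ((QuotientGroup.mk C : PSL2C) * ρ h * (QuotientGroup.mk C)⁻¹) ^ n
        = (QuotientGroup.mk C) * (ρ h ^ n) * (QuotientGroup.mk C)⁻¹ := by
      rw [← MulAut.conj_apply, ← map_zpow, MulAut.conj_apply]
    rw [e1, e2, hn]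
  constructor
  · -- not parabolic
    rintro ⟨hne, A, hmkA, htrA⟩
    have hA1 : A ≠ 1 := by
      rintro rfl
      exact hρh (by rw [← hmkA]; rfl)
    obtain ⟨C, u, hu, hCA⟩ := parabolic_normal_form A hA1 htrA
    apply hirr
    refine ⟨QuotientGroup.mk C, fun γ => ?_⟩
    have hgh : (QuotientGroup.mk C : PSL2C) * ρ h * (QuotientGroup.mk C)⁻¹ =
        QuotientGroup.mk (upU u) := by
      rw [← hmkA]
      have hCAC : C * A * C⁻¹ = upU u := by
        rw [mul_inv_eq_iff_eq_mul]; exact hCA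
      rw [← hCAC]
      rw [QuotientGroup.mk_mul, QuotientGroup.mk_mul, QuotientGroup.mk_inv]
    obtain ⟨B, hB⟩ := QuotientGroup.mk_surjective
      ((QuotientGroup.mk C : PSL2C) * ρ γ * (QuotientGroup.mk C)⁻¹)
    obtain ⟨n, hrel⟩ := conjrel C γ
    rw [hgh, ← hB] at hrel
    simp only [← QuotientGroup.mk_inv, ← QuotientGroup.mk_mul,
      ← QuotientGroup.mk_zpow] at hrel
    have hW : (upU u) ^ n ∈ UnipSL := Subgroup.zpow_mem _ (upU_mem_UnipSL u) n
    have hB10 : B.1 1 0 = 0 :=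
      unip_conj B ((upU u) ^ n) u hu hW ((mk_eq_mk_iff _ _).mp hrel)
    exact hB ▸ mk_upper B hB10
  · -- diagonalizable part
    obtain ⟨A, hmkA⟩ := QuotientGroup.mk_surjective (ρ h)
    have hA1 : A ≠ 1 := by
      rintro rfl
      exact hρh (by rw [← hmkA]; rfl)
    have hAm1 : A ≠ -1 := by
      rintro rfl
      apply hρh
      rw [← hmkA]
      have : ((-1 : SL2C) : SL2C) = -(1 : SL2C) := rfl
      rw [show (QuotientGroup.mk (-1 : SL2C) : PSL2C) = QuotientGroup.mk (1 : SL2C) from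
        (mk_eq_mk_iff _ _).mpr (Or.inr rfl)]
      rfl
    have notpar : ¬ IsParabolic (ρ h) := by
      rintro ⟨hne, A', hmkA', htrA'⟩
      have hA'1 : A' ≠ 1 := by
        rintro rfl
        exact hρh (by rw [← hmkA']; rfl)
      obtain ⟨C, u, hu, hCA⟩ := parabolic_normal_form A' hA'1 htrA'
      apply hirr
      refine ⟨QuotientGroup.mk C, fun γ => ?_⟩
      have hgh : (QuotientGroup.mk C : PSL2C) * ρ h * (QuotientGroup.mk C)⁻¹ =
          QuotientGroup.mk (upU u) := by
        rw [← hmkA']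
        have hCAC : C * A' * C⁻¹ = upU u := by
          rw [mul_inv_eq_iff_eq_mul]; exact hCA
        rw [← hCAC]
        rw [QuotientGroup.mk_mul, QuotientGroup.mk_mul, QuotientGroup.mk_inv]
      obtain ⟨B, hB⟩ := QuotientGroup.mk_surjective
        ((QuotientGroup.mk C : PSL2C) * ρ γ * (QuotientGroup.mk C)⁻¹)
      obtain ⟨n, hrel⟩ := conjrel C γ
      rw [hgh, ← hB] at hrel
      simp only [← QuotientGroup.mk_inv, ← QuotientGroup.mk_mul,
        ← QuotientGroup.mk_zpow] at hrel
      have hW : (upU u) ^ n ∈ UnipSL := Subgroup.zpow_mem _ (upU_mem_UnipSL u) n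
      have hB10 : B.1 1 0 = 0 :=
        unip_conj B ((upU u) ^ n) u hu hW ((mk_eq_mk_iff _ _).mp hrel)
      exact hB ▸ mk_upper B hB10
    have htr2 : Matrix.trace (A : Matrix (Fin 2) (Fin 2) ℂ) ≠ 2 := by
      intro hc
      exact notpar ⟨hρh, A, hmkA, hc⟩
    have htrm2 : Matrix.trace (A : Matrix (Fin 2) (Fin 2) ℂ) ≠ -2 := by
      intro hc
      apply notpar
      refine ⟨hρh, -A, ?_, ?_⟩
      · rw [← hmkA]
        exact (mk_eq_mk_iff _ _).mpr (Or.inr rfl)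
      · rw [Matrix.trace_fin_two, sl2_neg, sl2_neg]
        rw [Matrix.trace_fin_two] at hc
        linear_combination -hc
    obtain ⟨M, z, hz2, hAM⟩ := diag_normal_form A htr2 htrm2
    set C := M⁻¹ with hCdef
    have hCAC : C * A * C⁻¹ = dgS z := by
      rw [hCdef, inv_inv]
      rw [mul_assoc]
      rw [hAM]
      group
    have hgh : (QuotientGroup.mk C : PSL2C) * ρ h * (QuotientGroup.mk C)⁻¹ =
        QuotientGroup.mk (dgS z) := by
      rw [← hmkA, ← hCAC]
      simp only [QuotientGroup.mk_mul, QuotientGroup.mk_inv]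
    constructor
    · exact ⟨QuotientGroup.mk C, z, by rw [hgh, diagClass_eq]⟩
    · -- index ≤ 2 subgroup
      set g : PSL2C := QuotientGroup.mk C with hgdef
      have hmem : ∀ γ : Γ, (g * ρ γ * g⁻¹ ∈ Set.range diagClass) ∨
          (g * ρ γ * g⁻¹ ∈ Set.range antidiagClass) := by
        intro γ
        obtain ⟨B, hB⟩ := QuotientGroup.mk_surjective (g * ρ γ * g⁻¹)
        obtain ⟨n, hrel⟩ := conjrel C γ
        rw [hgh] at hrel
        rw [show (QuotientGroup.mk C : PSL2C) * ρ γ * (QuotientGroup.mk C)⁻¹ =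
          g * ρ γ * g⁻¹ from rfl, ← hB] at hrel
        simp only [← QuotientGroup.mk_inv, ← QuotientGroup.mk_mul,
          ← QuotientGroup.mk_zpow] at hrel
        have hW : (dgS z) ^ n ∈ DiagSL := Subgroup.zpow_mem _ (dgS_mem_DiagSL z) n
        rcases diag_conj B ((dgS z) ^ n) z hz2 hW ((mk_eq_mk_iff _ _).mp hrel) with
          ⟨h10, h01⟩ | ⟨h00, h11⟩
        · left; exact hB ▸ mk_diag B h10 h01
        · right; exact hB ▸ mk_anti B h00 h11
      obtain ⟨hDD, hDA, hAD, hAA⟩ := mul_class_mem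
      set fconj : Γ → PSL2C := fun γ => g * ρ γ * g⁻¹ with hfconj
      have hfconj_mul : ∀ x y : Γ, fconj (x * y) = fconj x * fconj y := by
        intro x y
        simp only [hfconj, _root_.map_mul]
        group
      classical
      set fsign : Γ → Multiplicative (ZMod 2) :=
        fun γ => if fconj γ ∈ Set.range diagClass then 1 else Multiplicative.ofAdd 1
        with hfs
      have hfmul : ∀ x y : Γ, fsign (x * y) = fsign x * fsign y := by
        intro x y
        simp only [hfs]
        by_cases hx : fconj x ∈ Set.range diagClass <;>
          by_cases hy : fconj y ∈ Set.range diagClass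
        · rw [if_pos hx, if_pos hy, if_pos (by rw [hfconj_mul]; exact hDD _ _ hx hy)]
          norm_num
        · have hy' := (hmem y).resolve_left hy
          rw [if_pos hx, if_neg hy, if_neg (by
            rw [hfconj_mul]
            intro hc
            exact not_mem_anti_of_mem_diag hc (hDA _ _ hx hy'))]
          norm_num
        · have hx' := (hmem x).resolve_left hx
          rw [if_neg hx, if_pos hy, if_neg (by
            rw [hfconj_mul]
            intro hc
            exact not_mem_anti_of_mem_diag hc (hAD _ _ hx' hy))]
          norm_num
        · have hx' := (hmem x).resolve_left hx
          have hy' := (hmem y).resolve_left hy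
          rw [if_neg hx, if_neg hy, if_pos (by rw [hfconj_mul]; exact hAA _ _ hx' hy')]
          decide
      set f : Γ →* Multiplicative (ZMod 2) := MonoidHom.mk' fsign hfmul with hfdef
      refine ⟨f.ker, ?_, ?_⟩
      · have h1 : f.ker.index = Nat.card f.range := Subgroup.index_ker f
        have h2 : Nat.card f.range ∣ 2 := by
          have := Subgroup.card_subgroup_dvd_card f.range
          simpa [Nat.card_eq_fintype_card] using this
        have h3 : Nat.card f.range ≠ 0 := Nat.card_pos.ne'
        rw [h1]
        rcases (Nat.dvd_prime Nat.prime_two).mp h2 with h | h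
        · left; exact h
        · right; exact h
      · intro a ha b hb
        have hfa : fconj a ∈ Set.range diagClass := by
          have hfa1 := MonoidHom.mem_ker.mp ha
          rw [hfdef] at hfa1
          simp only [MonoidHom.mk'_apply, hfs] at hfa1
          by_contra hc
          rw [if_neg hc] at hfa1
          exact (by decide : (Multiplicative.ofAdd (1 : ZMod 2)) ≠ 1) hfa1
        have hfb : fconj b ∈ Set.range diagClass := by
          have hfb1 := MonoidHom.mem_ker.mp hb
          rw [hfdef] at hfb1
          simp only [MonoidHom.mk'_apply, hfs] at hfb1
          by_contra hc
          rw [if_neg hc] at hfb1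
          exact (by decide : (Multiplicative.ofAdd (1 : ZMod 2)) ≠ 1) hfb1
        obtain ⟨za, hza⟩ := hfa
        obtain ⟨zb, hzb⟩ := hfb
        have hcomm : fconj a * fconj b = fconj b * fconj a := by
          rw [← hza, ← hzb, diagClass_mul, diagClass_mul, mul_comm]
        have : g * (ρ a * ρ b) * g⁻¹ = g * (ρ b * ρ a) * g⁻¹ := by
          have h1 : fconj a * fconj b = g * (ρ a * ρ b) * g⁻¹ := by
            simp only [hfconj]; group
          have h2 : fconj b * fconj a = g * (ρ b * ρ a) * g⁻¹ := by
            simp only [hfconj]; group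
          rw [← h1, ← h2, hcomm]
        have := mul_left_cancel (mul_right_cancel this)
        exact this
end
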